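/- For every integer n ≥ 1, Q_{2n−1}(x) = Σ_{k=0}^{n−1} (C(n, k+1)/k!) x^{k+1} and Q_{2n}(x) = Σ_{k=0}^{n} (C(n, k)/k!) x^{k}. -/

import Mathlib

open Polynomial Finset

/-- With `Pₙ/Qₙ` the truncations of the continued fraction with partial
denominators `mₙ = x` (`n` odd), `mₙ = 2/n` (`n` even):
`Q_{2n-1}(x) = ∑_{k=0}^{n-1} (C(n,k+1)/k!) x^{k+1}` and
`Q_{2n}(x) = ∑_{k=0}^{n} (C(n,k)/k!) x^{k}` for every `n ≥ 1`. -/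
theorem Q_explicit
    (P Q : ℤ → Polynomial ℚ) (m : ℤ → Polynomial ℚ)
    (hm : ∀ n : ℤ, m n = if Odd n then (X : Polynomial ℚ) else C (2 / (n : ℚ)))
    (hPm1 : P (-1) = 1) (hQm1 : Q (-1) = 0) (hP0 : P 0 = 0) (hQ0 : Q 0 = 1)
    (hP : ∀ n : ℤ, 1 ≤ n → P n = m n * P (n - 1) + P (n - 2))
    (hQ : ∀ n : ℤ, 1 ≤ n → Q n = m n * Q (n - 1) + Q (n - 2)) :
    ∀ n : ℕ, 1 ≤ n →
      Q (2 * (n : ℤ) - 1)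
          = ∑ k ∈ Finset.range n, C ((n.choose (k + 1) : ℚ) / (k.factorial : ℚ)) * X ^ (k + 1) ∧
      Q (2 * (n : ℤ))
          = ∑ k ∈ Finset.range (n + 1), C ((n.choose k : ℚ) / (k.factorial : ℚ)) * X ^ k := by
  have hQ1 : Q 1 = X := by
    have h := hQ 1 (by norm_num)
    rw [hm] at h
    norm_num at h
    rw [h, hQ0, hQm1]; ring
  have hQ2 : Q 2 = X + 1 := by
    have h := hQ 2 (by norm_num)
    rw [hm] at h
    have : ¬ Odd (2:ℤ) := by decide
    rw [if_neg this] at h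
    norm_num at h
    rw [h, hQ1, hQ0]
  intro n hn
  induction n with
  | zero => omega
  | succ n ih =>
    rcases Nat.eq_zero_or_pos n with rfl | hn'
    · constructor
      · rw [show ((2:ℤ)*((0:ℕ)+1:ℕ)-1) = 1 by norm_num, hQ1]
        norm_num
      · norm_num [hQ2, Finset.sum_range_succ]
        ring
    · obtain ⟨ihO, ihE⟩ := ih hn'
      have key : Q (2 * ((n:ℤ) + 1) - 1)
          = ∑ k ∈ Finset.range (n+1),
              C (((n+1).choose (k + 1) : ℚ) / (k.factorial : ℚ)) * X ^ (k + 1) := by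
        have h := hQ (2*(n:ℤ)+1) (by omega)
        have hodd : Odd (2*(n:ℤ)+1) := ⟨n, by ring⟩
        rw [hm, if_pos hodd] at h
        have e1 : (2*(n:ℤ)+1) - 1 = 2*n := by ring
        have e2 : (2*(n:ℤ)+1) - 2 = 2*n - 1 := by ring
        rw [e1, e2, ihO, ihE] at h
        have e3 : 2 * ((n:ℤ)+1) - 1 = 2*(n:ℤ)+1 := by ring
        rw [e3, h, Finset.mul_sum]
        have hz : (↑(n.choose (n+1)) : ℚ) / (n.factorial : ℚ) = 0 := by
          simp [Nat.choose_eq_zero_of_lt]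
        rw [show (∑ k ∈ Finset.range n,
              C ((n.choose (k + 1) : ℚ) / (k.factorial : ℚ)) * X ^ (k + 1))
            = ∑ k ∈ Finset.range (n+1),
              C ((n.choose (k + 1) : ℚ) / (k.factorial : ℚ)) * X ^ (k + 1) by
          rw [Finset.sum_range_succ, hz]; simp]
        rw [← Finset.sum_add_distrib]
        apply Finset.sum_congr rfl
        intro k _
        rw [Nat.choose_succ_succ]
        push_cast
        rw [add_div, C_add]
        ring
      refine ⟨key, ?_⟩
      have h := hQ (2*((n:ℤ)+1)) (by omega)
      have hnotodd : ¬ Odd (2*((n:ℤ)+1)) := by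
        simp [Int.not_odd_iff_even, parity_simps]
      rw [hm, if_neg hnotodd] at h
      have e1 : (2*((n:ℤ)+1)) - 1 = 2*((n:ℤ)+1) - 1 := rfl
      have e2 : (2*((n:ℤ)+1)) - 2 = 2*(n:ℤ) := by ring
      rw [e2, key, ihE] at h
      push_cast at h
      rw [show ((2:ℤ)*((n:ℕ)+1:ℕ)) = 2*((n:ℤ)+1) from by push_cast; ring, h]
      -- RHS target: split off k = 0
      rw [Finset.sum_range_succ' (fun k => C (((n+1).choose k : ℚ) / (k.factorial : ℚ)) * X ^ k) (n+1)]
      rw [Finset.sum_range_succ' (fun k => C ((n.choose k : ℚ) / (k.factorial : ℚ)) * X ^ k) n]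
      simp only [Nat.choose_zero_right, Nat.factorial_zero, pow_zero, Nat.cast_one, div_one, mul_one]
      have hz : ((n.choose (n+1)) : ℚ) / ((n+1).factorial : ℚ) = 0 := by
        simp [Nat.choose_eq_zero_of_lt]
      rw [show (∑ k ∈ Finset.range n,
            C ((n.choose (k+1) : ℚ) / ((k+1).factorial : ℚ)) * X ^ (k + 1))
          = ∑ k ∈ Finset.range (n+1),
            C ((n.choose (k+1) : ℚ) / ((k+1).factorial : ℚ)) * X ^ (k + 1) by
        rw [Finset.sum_range_succ, hz]; simp]
      rw [Finset.mul_sum, ← add_assoc, ← Finset.sum_add_distrib]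
      congr 1
      apply Finset.sum_congr rfl
      intro k hk
      rw [← mul_assoc, ← C_mul, ← add_mul, ← C_add]
      congr 1
      rw [C_inj]
      have hkn : k ≤ n := by
        simp only [Finset.mem_range] at hk; omega
      have key2 : ((n:ℚ)+1) * (n.choose k) = ((k:ℚ)+1) * ((n+1).choose (k+1)) := by
        have := Nat.add_one_mul_choose_eq n k
        have : ((n.succ * n.choose k : ℕ) : ℚ) = (((n+1).choose (k+1) * (k+1) : ℕ) : ℚ) := by
          exact_mod_cast congrArg (Nat.cast : ℕ → ℚ) this
        push_cast at this
        linarith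
      have hpascal : ((n+1).choose (k+1) : ℚ) = (n.choose k : ℚ) + (n.choose (k+1) : ℚ) := by
        rw [Nat.choose_succ_succ]; push_cast; ring
      have hf : ((k+1).factorial : ℚ) = (k+1) * (k.factorial : ℚ) := by
        rw [Nat.factorial_succ]; push_cast; ring
      have h1 : ((k.factorial : ℚ)) ≠ 0 := by positivity
      have h2 : ((k:ℚ)+1) ≠ 0 := by positivity
      have h3 : ((n:ℚ)+1) ≠ 0 := by positivity
      rw [hf]
      field_simp
      linear_combination (-1:ℚ) * key2 + (-((n:ℚ)+1)) * hpascal
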